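/- Let k ≥ 4 and let G be an odd k⁺-critical graph. Then every vertex v of G has either even degree or degree d(v) ≥ ⌊k/2⌋. -/

import Mathlib

open SimpleGraph

/-- The degree of a vertex, as the cardinality of its neighbor set. -/
noncomputable def deg {V : Type} (G : SimpleGraph V) (v : V) : ℕ := (G.neighborSet v).ncard

/-- `H` is a minor of `G`, via branch sets. -/
def IsMinor {W V : Type} (H : SimpleGraph W) (G : SimpleGraph V) : Prop :=
  ∃ B : W → Set V,
    (∀ w, (B w).Nonempty) ∧
    (∀ w, (G.induce (B w)).Connected) ∧
    (Pairwise fun w₁ w₂ => Disjoint (B w₁) (B w₂)) ∧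
    (∀ w₁ w₂, H.Adj w₁ w₂ → ∃ v₁ ∈ B w₁, ∃ v₂ ∈ B w₂, G.Adj v₁ v₂)

/-- A graph is planar iff it has no `K₅` and no `K₃,₃` minor (Wagner's theorem). -/
def IsPlanar {V : Type} (G : SimpleGraph V) : Prop :=
  ¬ IsMinor (completeGraph (Fin 5)) G ∧
  ¬ IsMinor (completeBipartiteGraph (Fin 3) (Fin 3)) G

/-- `G` has thickness at most `t`: its edge set partitions into `t` planar subgraphs. -/
def ThicknessLE {V : Type} (G : SimpleGraph V) (t : ℕ) : Prop :=
  ∃ c : Sym2 V → Fin t, ∀ i : Fin t,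
    IsPlanar (SimpleGraph.fromEdgeSet {e | e ∈ G.edgeSet ∧ c e = i})

/-- The thickness of a graph. -/
noncomputable def thickness {V : Type} (G : SimpleGraph V) : ℕ :=
  sInf {t | ThicknessLE G t}

/-- `φ` is an odd coloring of `G` with `k` colors. -/
def IsOddColoring {V : Type} (G : SimpleGraph V) {k : ℕ} (φ : V → Fin k) : Prop :=
  (∀ ⦃u v⦄, G.Adj u v → φ u ≠ φ v) ∧
  ∀ v : V, (G.neighborSet v).Nonempty →
    ∃ c : Fin k, Odd ({u | u ∈ G.neighborSet v ∧ φ u = c}.ncard)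

/-- The odd chromatic number of `G`. -/
noncomputable def oddChrom {V : Type} (G : SimpleGraph V) : ℕ :=
  sInf {k | ∃ φ : V → Fin k, IsOddColoring G φ}

/-- `G` is odd `k⁺`-critical. -/
def OddCritical {V : Type} (G : SimpleGraph V) (k : ℕ) : Prop :=
  k ≤ oddChrom G ∧ ∀ H : G.Subgraph, H ≠ ⊤ → oddChrom H.coe < k

/-- A vertex is `n`-easy if its degree is odd or it has a neighbor of degree `2i`, `1 ≤ i ≤ n`. -/
def NEasy {V : Type} (G : SimpleGraph V) (n : ℕ) (v : V) : Prop :=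
  Odd (deg G v) ∨ ∃ u ∈ G.neighborSet v, ∃ i, 1 ≤ i ∧ i ≤ n ∧ deg G u = 2 * i


/-- The subgraph obtained by deleting a vertex. -/
def delVert {V : Type} (G : SimpleGraph V) (v : V) : G.Subgraph where
  verts := {v}ᶜ
  Adj a b := G.Adj a b ∧ a ≠ v ∧ b ≠ v
  adj_sub h := h.1
  edge_vert h := by simpa using h.2.1
  symm := ⟨fun a b h => ⟨h.1.symm, h.2.2, h.2.1⟩⟩

lemma mem_delVert_verts {V : Type} (G : SimpleGraph V) (v u : V) :
    u ∈ (delVert G v).verts ↔ u ≠ v := by simp [delVert]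

lemma coe_delVert_adj {V : Type} (G : SimpleGraph V) (v : V)
    (a b : ↥(delVert G v).verts) :
    (delVert G v).coe.Adj a b ↔ G.Adj a b := by
  constructor
  · exact fun h => h.1
  · intro h
    exact ⟨h, (mem_delVert_verts G v a).1 a.2, (mem_delVert_verts G v b).1 b.2⟩

lemma exists_isOddColoring {W : Type} [Fintype W] (G : SimpleGraph W) :
    ∃ φ : W → Fin (Fintype.card W), IsOddColoring G φ := by
  classical
  refine ⟨Fintype.equivFin W, ?_, ?_⟩
  · intro u w h hc
    exact h.ne ((Fintype.equivFin W).injective hc)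
  · rintro w ⟨u, hu⟩
    refine ⟨Fintype.equivFin W u, ?_⟩
    have hs : {x | x ∈ G.neighborSet w ∧ Fintype.equivFin W x = Fintype.equivFin W u}
        = {u} := by
      ext x
      simp only [Set.mem_setOf_eq, Set.mem_singleton_iff, EmbeddingLike.apply_eq_iff_eq]
      constructor
      · exact fun h => h.2
      · rintro rfl
        exact ⟨hu, rfl⟩
    rw [hs, Set.ncard_singleton]
    exact odd_one

lemma isOddColoring_mono {W : Type} (G : SimpleGraph W) {m n : ℕ} (hmn : m ≤ n)
    (h : ∃ φ : W → Fin m, IsOddColoring G φ) :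
    ∃ φ : W → Fin n, IsOddColoring G φ := by
  obtain ⟨φ, hp, ho⟩ := h
  refine ⟨fun w => Fin.castLE hmn (φ w), ?_, ?_⟩
  · intro u w h hc
    exact hp h (Fin.castLE_injective hmn hc)
  · intro w hw
    obtain ⟨c, hc⟩ := ho w hw
    refine ⟨Fin.castLE hmn c, ?_⟩
    have hs : {u | u ∈ G.neighborSet w ∧ Fin.castLE hmn (φ u) = Fin.castLE hmn c}
        = {u | u ∈ G.neighborSet w ∧ φ u = c} := by
      ext u
      simp only [Set.mem_setOf_eq, and_congr_right_iff]
      exact fun _ => ⟨fun h => Fin.castLE_injective hmn h, fun h => h ▸ rfl⟩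
    rw [hs]; exact hc

lemma exists_oddColoring_of_le {W : Type} [Fintype W] (G : SimpleGraph W) {n : ℕ}
    (h : oddChrom G ≤ n) : ∃ φ : W → Fin n, IsOddColoring G φ := by
  have hS : {k | ∃ φ : W → Fin k, IsOddColoring G φ}.Nonempty :=
    ⟨Fintype.card W, exists_isOddColoring G⟩
  exact isOddColoring_mono G h (Nat.sInf_mem hS)

lemma exists_odd_fiber {V : Type} [Fintype V] {n : ℕ} (f : V → Fin n) (s : Set V)
    (hs : Odd s.ncard) :
    ∃ c : Fin n, Odd ({u | u ∈ s ∧ f u = c}.ncard) := by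
  classical
  by_contra hcon
  push_neg at hcon
  simp only [Nat.not_odd_iff_even] at hcon
  have hfin : s.Finite := Set.toFinite s
  set t := hfin.toFinset with ht
  have hcard : s.ncard = t.card := Set.ncard_eq_toFinset_card s hfin
  have hsum : t.card = ∑ c : Fin n, (t.filter (fun u => f u = c)).card :=
    Finset.card_eq_sum_card_fiberwise (fun u _ => Finset.mem_univ (f u))
  have hfib : ∀ c : Fin n, ({u | u ∈ s ∧ f u = c}.ncard) = (t.filter (fun u => f u = c)).card := by
    intro c
    have : {u | u ∈ s ∧ f u = c} = ↑(t.filter (fun u => f u = c)) := by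
      ext u
      simp only [Finset.coe_filter, ht, hfin.mem_toFinset, Set.mem_setOf_eq]
    rw [this, Set.ncard_coe_finset]
  have heven : Even (t.card) := by
    rw [hsum]
    exact Finset.even_sum _ (fun c _ => by rw [← hfib c]; exact hcon c)
  rw [hcard] at hs
  exact (Nat.not_odd_iff_even.2 heven) hs


/-- In an odd `k⁺`-critical graph (`k ≥ 4`), every vertex has even degree or degree `≥ ⌊k/2⌋`. -/
theorem oddCritical_degree_even_or_large {V : Type} [Fintype V] (G : SimpleGraph V)
    (k : ℕ) (hk : 4 ≤ k) (hG : OddCritical G k) :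
    ∀ v : V, Even (deg G v) ∨ k / 2 ≤ deg G v := by
  classical
  intro v
  by_contra hcon
  push_neg at hcon
  obtain ⟨hOddd, hlt⟩ := hcon
  rw [Nat.not_even_iff_odd] at hOddd
  set d := deg G v with hd
  have h2d : 2 * d ≤ k - 2 := by omega
  set H := delVert G v with hH
  -- H is a proper subgraph
  have hHne : H ≠ ⊤ := by
    intro h
    have hv : v ∈ H.verts := by rw [h]; trivial
    rw [hH, mem_delVert_verts] at hv
    exact hv rfl
  have hchrom : oddChrom H.coe < k := hG.2 H hHne
  haveI : Fintype ↥H.verts := Fintype.ofFinite _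
  obtain ⟨φ, hφp, hφo⟩ : ∃ φ : ↥H.verts → Fin (k - 1), IsOddColoring H.coe φ :=
    exists_oddColoring_of_le H.coe (by omega)
  have memH : ∀ {u : V}, u ≠ v → u ∈ H.verts := fun {u} h =>
    (mem_delVert_verts G v u).2 h
  -- choose, for each vertex of H, an odd color of its neighborhood (when nonempty)
  have hc : ∀ u : ↥H.verts, ∃ col : Fin (k - 1),
      (H.coe.neighborSet u).Nonempty →
        Odd ({w | w ∈ H.coe.neighborSet u ∧ φ w = col}.ncard) := by
    intro u
    by_cases h : (H.coe.neighborSet u).Nonempty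
    · obtain ⟨col, hcol⟩ := hφo u h
      exact ⟨col, fun _ => hcol⟩
    · exact ⟨⟨0, by omega⟩, fun hn => absurd hn h⟩
  choose c' hc' using hc
  -- total extensions to V
  set φ' : V → Fin (k - 1) := fun u =>
    if h : u = v then ⟨0, by omega⟩ else φ ⟨u, memH h⟩ with hφ'
  set c : V → Fin (k - 1) := fun u =>
    if h : u = v then ⟨0, by omega⟩ else c' ⟨u, memH h⟩ with hcdef
  -- forbidden colors
  set F : Set (Fin (k - 1)) := φ' '' G.neighborSet v ∪ c '' G.neighborSet v with hF
  have hFcard : F.ncard ≤ 2 * d := by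
    have h1 : (φ' '' G.neighborSet v).ncard ≤ d := Set.ncard_image_le
    have h2 : (c '' G.neighborSet v).ncard ≤ d := Set.ncard_image_le
    calc F.ncard ≤ (φ' '' G.neighborSet v).ncard + (c '' G.neighborSet v).ncard :=
          Set.ncard_union_le _ _
      _ ≤ 2 * d := by omega
  have hFne : F ≠ Set.univ := by
    intro h
    have h1 : F.ncard = k - 1 := by
      rw [h, Set.ncard_univ, Nat.card_eq_fintype_card, Fintype.card_fin]
    omega
  obtain ⟨a, haF⟩ : ∃ a : Fin (k - 1), a ∉ F := by
    by_contra h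
    push_neg at h
    exact hFne (Set.eq_univ_of_forall h)
  -- the extended coloring
  set ψ : V → Fin (k - 1) := fun u => if u = v then a else φ' u with hψdef
  have hψv : ψ v = a := by simp [hψdef]
  have hψu : ∀ {u : V} (h : u ≠ v), ψ u = φ ⟨u, memH h⟩ := by
    intro u h
    simp [hψdef, hφ', h]
  have hφ'mem : ∀ u ∈ G.neighborSet v, φ' u ∈ F :=
    fun u hu => Or.inl ⟨u, hu, rfl⟩
  have hcmem : ∀ u ∈ G.neighborSet v, c u ∈ F :=
    fun u hu => Or.inr ⟨u, hu, rfl⟩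
  have hψnv : ∀ u ∈ G.neighborSet v, ψ u = φ' u := by
    intro u hu
    have : u ≠ v := (Adj.ne hu).symm
    simp [hψdef, this]
  -- properness
  have hproper : ∀ ⦃u w : V⦄, G.Adj u w → ψ u ≠ ψ w := by
    intro u w hadj
    by_cases hu : u = v
    · have hwv : w ≠ v := fun h => hadj.ne (hu.trans h.symm)
      rw [hu, hψv, hψu hwv]
      intro h
      apply haF
      rw [h]
      have : φ' w = φ ⟨w, memH hwv⟩ := by simp [hφ', hwv]
      rw [← this]
      exact hφ'mem w (hu ▸ hadj)
    · by_cases hw : w = v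
      · have huv : u ≠ v := hu
        rw [hw, hψv, hψu huv]
        intro h
        apply haF
        rw [← h]
        have : φ' u = φ ⟨u, memH huv⟩ := by simp [hφ', huv]
        rw [← this]
        exact hφ'mem u (hw ▸ hadj.symm)
      · rw [hψu hu, hψu hw]
        exact hφp ((coe_delVert_adj G v ⟨u, memH hu⟩ ⟨w, memH hw⟩).2 hadj)
  -- oddness
  have hodd : ∀ w : V, (G.neighborSet w).Nonempty →
      ∃ col : Fin (k - 1), Odd ({u | u ∈ G.neighborSet w ∧ ψ u = col}.ncard) := by
    intro w hwne
    by_cases hwv : w = v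
    · subst hwv
      exact exists_odd_fiber ψ _ hOddd
    · set wH : ↥H.verts := ⟨w, memH hwv⟩ with hwH
      -- general image identity
      have himg : ∀ col : Fin (k - 1), ¬ (G.Adj w v ∧ a = col) →
          {u | u ∈ G.neighborSet w ∧ ψ u = col}
            = Subtype.val '' {u : ↥H.verts | u ∈ H.coe.neighborSet wH ∧ φ u = col} := by
        intro col hcol
        ext u
        simp only [Set.mem_setOf_eq, Set.mem_image, mem_neighborSet]
        constructor
        · rintro ⟨hadj, hcu⟩
          have huv : u ≠ v := by
            intro h
            refine hcol ⟨by rwa [h] at hadj, ?_⟩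
            rw [← hψv, ← h]
            exact hcu
          refine ⟨⟨u, memH huv⟩, ⟨?_, ?_⟩, rfl⟩
          · exact (coe_delVert_adj G v wH ⟨u, memH huv⟩).2 hadj
          · rw [← hψu huv]; exact hcu
        · rintro ⟨⟨u', hu'⟩, ⟨hadj, hcu⟩, rfl⟩
          have huv : u' ≠ v := (mem_delVert_verts G v u').1 hu'
          refine ⟨(coe_delVert_adj G v wH ⟨u', hu'⟩).1 hadj, ?_⟩
          rw [hψu huv]
          exact hcu
      by_cases hHne' : (H.coe.neighborSet wH).Nonempty
      · -- use chosen odd color of wH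
        set col := c' wH with hcol
        have hOddH := hc' wH hHne'
        have hane : ¬ (G.Adj w v ∧ a = col) := by
          rintro ⟨hadj, rfl⟩
          apply haF
          have : c w = c' wH := by simp [hcdef, hwv, hwH]
          rw [← this] at hcol
          rw [hcol]
          exact hcmem w hadj.symm
        refine ⟨col, ?_⟩
        rw [himg col hane, Set.ncard_image_of_injective _ Subtype.val_injective]
        exact hOddH
      · -- N_G(w) = {v}
        have hadjwv : G.Adj w v := by
          obtain ⟨u, hu⟩ := hwne
          by_cases huv : u = v
          · exact huv ▸ hu
          · exfalso
            apply hHne'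
            exact ⟨⟨u, memH huv⟩, (coe_delVert_adj G v wH ⟨u, memH huv⟩).2 hu⟩
        refine ⟨a, ?_⟩
        have : {u | u ∈ G.neighborSet w ∧ ψ u = a} = {v} := by
          ext u
          simp only [Set.mem_setOf_eq, Set.mem_singleton_iff, mem_neighborSet]
          constructor
          · rintro ⟨hadj, _⟩
            by_contra huv
            apply hHne'
            exact ⟨⟨u, memH huv⟩, (coe_delVert_adj G v wH ⟨u, memH huv⟩).2 hadj⟩
          · rintro rfl
            exact ⟨hadjwv, hψv⟩
        rw [this, Set.ncard_singleton]
        exact odd_one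
  -- contradiction with oddChrom G ≥ k
  have hmem : (k - 1) ∈ {m | ∃ φ : V → Fin m, IsOddColoring G φ} :=
    ⟨ψ, hproper, hodd⟩
  have : oddChrom G ≤ k - 1 := Nat.sInf_le hmem
  have := hG.1
  omega
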